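/- Let H be a pseudoexpander with n = |V(H)| and m = |Roots(H)|, and let Z be a uniform read-d-times non-deterministic branching program computing φ_H with d ≤ (log₂ n)/10⁵. Then on each computational path P of Z there is a set X of at most (log₂ n)/4000 vertices of P that separates two disjoint subsets of Roots(H) of size at least m^0.999 each. -/

import Mathlib

open scoped Classical

namespace NBPPaper

/-! ### Literals and assignments.
A literal is a pair `(x, b)` of a variable and a polarity (`true` = positive literal).
A set of literals is a `Finset (Var × Bool)`. -/

/-- A set of literals is consistent: no variable occurs both positively and negatively. -/
def Consistent {Var : Type} (S : Finset (Var × Bool)) : Prop :=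
  ∀ x : Var, ¬((x, true) ∈ S ∧ (x, false) ∈ S)

/-- `S` is a set of literals over the variable set `W`. -/
def LitsOver {Var : Type} (W : Finset Var) (S : Finset (Var × Bool)) : Prop :=
  Consistent S ∧ ∀ l ∈ S, l.1 ∈ W

/-- `S` is an assignment of exactly the variables of `W`:
it contains exactly one literal of each variable of `W` and nothing else. -/
def AssignsExactly {Var : Type} (W : Finset Var) (S : Finset (Var × Bool)) : Prop :=
  (∀ l ∈ S, l.1 ∈ W) ∧ ∀ x ∈ W, ∃! b : Bool, (x, b) ∈ S

/-- Satisfaction of a CNF, given as a set of clauses (each clause a set of literals):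
every clause contains a literal of `S`. -/
def SatCNF {V : Type} (φ : Set (Finset (V × Bool))) (S : Finset (V × Bool)) : Prop :=
  ∀ C ∈ φ, ∃ l ∈ C, l ∈ S

/-! ### Nondeterministic branching programs -/

/-- An edge of a nondeterministic branching program over variable type `Var`
with vertex set `Fin n`.  `lab = none` means the edge is unlabelled; the field
`id` allows parallel edges (multigraph). -/
structure NBPEdge (Var : Type) (n : ℕ) where
  src : Fin n
  dst : Fin n
  lab : Option (Var × Bool)
  id : ℕ
deriving DecidableEq

/-- A nondeterministic branching program: a finite DAG (the vertices `Fin n` are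
listed in a topological order, i.e. every edge increases the index) with a single
source (the only vertex with no incoming edge) and a single sink (the only vertex
with no outgoing edge). -/
structure NBP (Var : Type) where
  n : ℕ
  edges : Finset (NBPEdge Var n)
  source : Fin n
  sink : Fin n
  acyc : ∀ e ∈ edges, e.src < e.dst
  source_no_in : ∀ e ∈ edges, e.dst ≠ source
  sink_no_out : ∀ e ∈ edges, e.src ≠ sink
  only_source : ∀ v : Fin n, v ≠ source → ∃ e ∈ edges, e.dst = v
  only_sink : ∀ v : Fin n, v ≠ sink → ∃ e ∈ edges, e.src = v

variable {Var : Type}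

/-- The set of literals labelling the edges of a path (a list of edges). -/
def pathLits [DecidableEq Var] {n : ℕ} (p : List (NBPEdge Var n)) : Finset (Var × Bool) :=
  (p.filterMap NBPEdge.lab).toFinset

/-- The set of variables occurring (as edge labels) on a path. -/
def pathVars [DecidableEq Var] {n : ℕ} (p : List (NBPEdge Var n)) : Finset Var :=
  ((p.filterMap NBPEdge.lab).map Prod.fst).toFinset

/-- The set of vertices visited by a path. -/
def pathVertices {n : ℕ} (p : List (NBPEdge Var n)) : Finset (Fin n) :=
  (p.map NBPEdge.src).toFinset ∪ (p.map NBPEdge.dst).toFinset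

/-- The number of occurrences of the variable `x` as an edge label on the path `p`. -/
def occCount [DecidableEq Var] {n : ℕ} (x : Var) (p : List (NBPEdge Var n)) : ℕ :=
  (p.filterMap NBPEdge.lab).countP (fun l => decide (l.1 = x))

namespace NBP

/-- `p` is a directed path of `Z` from vertex `u` to vertex `v`. -/
def IsPathFrom (Z : NBP Var) (u v : Fin Z.n) (p : List (NBPEdge Var Z.n)) : Prop :=
  p ≠ [] ∧ (∀ e ∈ p, e ∈ Z.edges) ∧ List.Chain' (fun e f => e.dst = f.src) p ∧
    p.head?.map NBPEdge.src = some u ∧ p.getLast?.map NBPEdge.dst = some v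

/-- `p` is a source-sink path of `Z`. -/
def IsSourceSink (Z : NBP Var) (p : List (NBPEdge Var Z.n)) : Prop :=
  Z.IsPathFrom Z.source Z.sink p

/-- A computational path: a source-sink path carrying no two opposite literals. -/
def IsCompPath [DecidableEq Var] (Z : NBP Var) (p : List (NBPEdge Var Z.n)) : Prop :=
  Z.IsSourceSink p ∧ Consistent (pathLits p)

/-- The set `Vars(Z)` of variables whose literals occur on edges of `Z`. -/
def vars [DecidableEq Var] (Z : NBP Var) : Finset Var :=
  Z.edges.biUnion (fun e => (e.lab.map Prod.fst).toFinset)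

/-- `Z` is a (syntactic) read-`d`-times NBP. -/
def ReadTimes [DecidableEq Var] (Z : NBP Var) (d : ℕ) : Prop :=
  ∀ p, Z.IsSourceSink p → ∀ x : Var, occCount x p ≤ d

/-- `Z` is a uniform read-`d`-times NBP: every variable of `Z` occurs exactly `d`
times on every source-sink path. -/
def UniformReadTimes [DecidableEq Var] (Z : NBP Var) (d : ℕ) : Prop :=
  Z.ReadTimes d ∧ ∀ p, Z.IsSourceSink p → ∀ x ∈ Z.vars, occCount x p = d

/-- `Z` computes the Boolean function with variable set `W` whose satisfying
(total) assignments are described by the predicate `F`. -/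
def Computes [DecidableEq Var] (Z : NBP Var) (W : Finset Var)
    (F : Finset (Var × Bool) → Prop) : Prop :=
  Z.vars = W ∧ ∀ S, AssignsExactly W S → (F S ↔ ∃ p, Z.IsCompPath p ∧ pathLits p ⊆ S)

end NBP

/-- `parts` is the partition of the path `p` generated by the vertex set `X`:
`p` is cut into `|X| + 1` consecutive nonempty subpaths whose cut points are
exactly the vertices of `X`. -/
def GeneratesPartition {n : ℕ} (X : Finset (Fin n)) (p : List (NBPEdge Var n))
    (parts : List (List (NBPEdge Var n))) : Prop :=
  p = parts.flatten ∧ parts.length = X.card + 1 ∧ (∀ q ∈ parts, q ≠ []) ∧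
    (parts.dropLast.filterMap (fun q => q.getLast?.map NBPEdge.dst)).toFinset = X

/-- Variables of `Y₁` occur only on parts with even (0-based) index, i.e. odd-numbered
subpaths, and variables of `Y₂` only on parts with odd (0-based) index. -/
def OddEvenSplit [DecidableEq Var] {n : ℕ} (parts : List (List (NBPEdge Var n)))
    (Y₁ Y₂ : Finset Var) : Prop :=
  ∀ k : ℕ, ∀ x ∈ pathVars (parts.getD k []),
    (x ∈ Y₁ → k % 2 = 0) ∧ (x ∈ Y₂ → k % 2 = 1)

/-- The set `X` of vertices of `Z` (containing neither source nor sink) separates the two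
disjoint subsets `Y₁, Y₂` of `Vars(Z)`. -/
def NBP.Separates [DecidableEq Var] (Z : NBP Var) (X : Finset (Fin Z.n))
    (Y₁ Y₂ : Finset Var) : Prop :=
  Disjoint Y₁ Y₂ ∧ Y₁ ⊆ Z.vars ∧ Y₂ ⊆ Z.vars ∧ Z.source ∉ X ∧ Z.sink ∉ X ∧
  ∃ p parts, Z.IsCompPath p ∧ GeneratesPartition X p parts ∧
    (OddEvenSplit parts Y₁ Y₂ ∨ OddEvenSplit parts Y₂ Y₁)

/-! ### Rooted trees -/

/-- A finite rooted tree on (a subset of) the vertex type `V`, given by a parent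
function together with a depth function certifying acyclicity. -/
structure RootedTree (V : Type) [DecidableEq V] where
  verts : Finset V
  root : V
  parent : V → V
  depth : V → ℕ
  root_mem : root ∈ verts
  parent_mem : ∀ v ∈ verts, v ≠ root → parent v ∈ verts
  depth_root : depth root = 0
  depth_parent : ∀ v ∈ verts, v ≠ root → depth v = depth (parent v) + 1

namespace RootedTree

variable {V : Type} [DecidableEq V]

/-- The children of a vertex. -/
def children (T : RootedTree V) (u : V) : Finset V :=
  T.verts.filter (fun v => v ≠ T.root ∧ T.parent v = u)

/-- The leaves of the tree: vertices with no children. -/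
def leaves (T : RootedTree V) : Finset V :=
  T.verts.filter (fun v => T.children v = ∅)

/-- The vertex set of the path from the root to `v` (i.e. `v` and all its ancestors). -/
def pathVerts (T : RootedTree V) (v : V) : Finset V :=
  (Finset.range (T.depth v + 1)).image (fun k => T.parent^[k] v)

/-- The height of the tree: the largest number of vertices on a root-leaf path. -/
def height (T : RootedTree V) : ℕ :=
  (T.verts.sup T.depth) + 1

/-- Every vertex has at most two children. -/
def IsBinary (T : RootedTree V) : Prop :=
  ∀ u ∈ T.verts, (T.children u).card ≤ 2

/-- The tree is extended: none of its leaves has a sibling. -/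
def IsExtended (T : RootedTree V) : Prop :=
  ∀ v ∈ T.verts, v ≠ T.root → T.children v = ∅ → T.children (T.parent v) = {v}

/-- The edge set of the tree (as unordered pairs). -/
def edgeSet (T : RootedTree V) : Finset (Sym2 V) :=
  (T.verts.filter (fun v => v ≠ T.root)).image (fun v => s(v, T.parent v))

end RootedTree

/-! ### Binary-tree-based graphs and pseudoexpanders -/

/-- A binary-tree-based (BTB) graph on the vertex type `V`: an edge-disjoint union of
`m` extended binary rooted trees such that every leaf of one of the trees is a leaf of
exactly two of the trees, any two trees have at most one vertex in common (that vertex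
being a leaf of both), and the roots are pairwise distinct. -/
structure BTB (V : Type) [DecidableEq V] [Fintype V] where
  m : ℕ
  tree : Fin m → RootedTree V
  binary : ∀ i, (tree i).IsBinary
  extended : ∀ i, (tree i).IsExtended
  cover : ∀ v : V, ∃ i, v ∈ (tree i).verts
  edge_disjoint : ∀ i j, i ≠ j → Disjoint ((tree i).edgeSet) ((tree j).edgeSet)
  leaf_two : ∀ i, ∀ v ∈ (tree i).leaves,
    (Finset.univ.filter (fun j => v ∈ (tree j).leaves)).card = 2
  common_le_one : ∀ i j, i ≠ j → ∀ u v,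
    u ∈ (tree i).verts → u ∈ (tree j).verts →
    v ∈ (tree i).verts → v ∈ (tree j).verts → u = v
  common_leaf : ∀ i j, i ≠ j → ∀ v, v ∈ (tree i).verts → v ∈ (tree j).verts →
    v ∈ (tree i).leaves ∧ v ∈ (tree j).leaves
  roots_inj : Function.Injective (fun i => (tree i).root)

namespace BTB

variable {V : Type} [DecidableEq V] [Fintype V]

/-- `ℓ` is the common leaf of the (adjacent) trees `T_i` and `T_j`. -/
def IsCommonLeaf (H : BTB V) (i j : Fin H.m) (ℓ : V) : Prop :=
  i ≠ j ∧ ℓ ∈ (H.tree i).leaves ∧ ℓ ∈ (H.tree j).leaves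

/-- The trees `T_i` and `T_j` are adjacent (share a common leaf); equivalently,
`{t_i, t_j}` is a pseudoedge of `H`. -/
def Adjacent (H : BTB V) (i j : Fin H.m) : Prop :=
  ∃ ℓ, H.IsCommonLeaf i j ℓ

/-- The pseudodegree of the root `t_i`: the number of pseudoedges containing it. -/
noncomputable def pseudodegree (H : BTB V) (i : Fin H.m) : ℕ :=
  (Finset.univ.filter (fun j => H.Adjacent i j)).card

/-- The set of root vertices of `H`. -/
def rootSet (H : BTB V) : Finset V :=
  Finset.univ.image (fun i => (H.tree i).root)

/-- A pseudomatching: a set of pseudoedges (recorded as ordered pairs of root indices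
with `i < j`) no two of which share an end. -/
def IsPseudomatching (H : BTB V) (M : Finset (Fin H.m × Fin H.m)) : Prop :=
  (∀ e ∈ M, e.1 < e.2 ∧ H.Adjacent e.1 e.2) ∧
  ∀ e ∈ M, ∀ f ∈ M, e ≠ f → e.1 ≠ f.1 ∧ e.1 ≠ f.2 ∧ e.2 ≠ f.1 ∧ e.2 ≠ f.2

/-- A pseudomatching between the disjoint sets `U` and `W` of roots (given by their
indices): every pseudoedge of `M` has one end in `U` and the other in `W`. -/
def IsPseudomatchingBetween (H : BTB V) (M : Finset (Fin H.m × Fin H.m))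
    (U W : Finset (Fin H.m)) : Prop :=
  H.IsPseudomatching M ∧ ∀ e ∈ M, (e.1 ∈ U ∧ e.2 ∈ W) ∨ (e.1 ∈ W ∧ e.2 ∈ U)

/-- The set `⋃M` of root vertices matched by the pseudomatching `M`. -/
def matchingRoots (H : BTB V) (M : Finset (Fin H.m × Fin H.m)) : Finset V :=
  M.biUnion (fun e => {(H.tree e.1).root, (H.tree e.2).root})

/-- The vertex set `V(P_{i,j})` of the path connecting the roots `t_i` and `t_j`
through their common leaf `ℓ`. -/
def clauseVerts (H : BTB V) (i j : Fin H.m) (ℓ : V) : Finset V :=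
  (H.tree i).pathVerts ℓ ∪ (H.tree j).pathVerts ℓ

/-- `S` satisfies the monotone CNF `φ_H`. -/
def SatisfiesPhi (H : BTB V) (S : Finset (V × Bool)) : Prop :=
  ∀ i j ℓ, H.IsCommonLeaf i j ℓ → ∃ v ∈ H.clauseVerts i j ℓ, (v, true) ∈ S

/-- `S` falsifies no clause of `φ_H`. -/
def FalsifiesNoClause (H : BTB V) (S : Finset (V × Bool)) : Prop :=
  ∀ i j ℓ, H.IsCommonLeaf i j ℓ → ¬(∀ v ∈ H.clauseVerts i j ℓ, (v, false) ∈ S)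

/-- `H` is a pseudoexpander. -/
def IsPseudoexpander (H : BTB V) : Prop :=
  (∀ i, ((H.tree i).height : ℝ) ≤ Real.logb 2 H.m / 4.9 + 3) ∧
  ∀ U W : Finset (Fin H.m), Disjoint U W →
    (H.m : ℝ) ^ (0.999 : ℝ) ≤ U.card → (H.m : ℝ) ^ (0.999 : ℝ) ≤ W.card →
    ∃ M, H.IsPseudomatchingBetween M U W ∧ (H.m : ℝ) ^ (0.999 : ℝ) / 3 ≤ M.card

/-! #### The probability space on the satisfying assignments of `φ_H` -/

/-- The set `SAT(H)` of satisfying assignments of `φ_H` (total assignments of the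
variables `V(H)` satisfying every clause). -/
noncomputable def SATH (H : BTB V) : Finset (Finset (V × Bool)) :=
  Finset.univ.filter (fun S => AssignsExactly Finset.univ S ∧ H.SatisfiesPhi S)

/-- `Fix(S)`: the set of leaf variables `ℓ_{i,j}` occurring positively in `S` such that
all the other variables of the clause `C_{i,j}` occur negatively in `S`. -/
def Fix (H : BTB V) (S : Finset (V × Bool)) : Set V :=
  {ℓ | ∃ i j, H.IsCommonLeaf i j ℓ ∧ (ℓ, true) ∈ S ∧
      ∀ v ∈ H.clauseVerts i j ℓ, v ≠ ℓ → (v, false) ∈ S}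

/-- The probability weight of `S`: `(1/2) ^ |V(H) \ Fix(S)|`. -/
noncomputable def weight (H : BTB V) (S : Finset (V × Bool)) : ℝ :=
  (1 / 2 : ℝ) ^ (Fintype.card V - (H.Fix S).ncard)

/-- The probability of the event `E` in the probability space on `SAT(H)`. -/
noncomputable def Pr (H : BTB V) (E : Finset (V × Bool) → Prop) : ℝ :=
  ∑ S ∈ H.SATH.filter E, H.weight S

/-- `|S \ Fix(S)|`: the number of literals of `S` that are not fixed. -/
noncomputable def nonFixedCount (H : BTB V) (S : Finset (V × Bool)) : ℕ :=
  (S.filter (fun l => ¬(l.2 = true ∧ l.1 ∈ H.Fix S))).card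

/-- `v` and `w` are siblings (in one of the trees of `H`). -/
def Sibling (H : BTB V) (v w : V) : Prop :=
  ∃ k, v ∈ (H.tree k).verts ∧ w ∈ (H.tree k).verts ∧
    v ≠ (H.tree k).root ∧ w ≠ (H.tree k).root ∧ v ≠ w ∧
    (H.tree k).parent v = (H.tree k).parent w

/-- `S` respects the pseudoedge `{t_i, t_j}`: all non-root variables of `C_{i,j}` occur
negatively in `S` and the siblings of all internal variables of `C_{i,j}` occur
positively in `S`. -/
def Respects (H : BTB V) (i j : Fin H.m) (S : Finset (V × Bool)) : Prop :=
  ∃ ℓ, H.IsCommonLeaf i j ℓ ∧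
    (∀ v ∈ H.clauseVerts i j ℓ,
      v ≠ (H.tree i).root → v ≠ (H.tree j).root → (v, false) ∈ S) ∧
    (∀ v ∈ H.clauseVerts i j ℓ,
      v ≠ (H.tree i).root → v ≠ (H.tree j).root → v ≠ ℓ →
      ∀ w, H.Sibling v w → (w, true) ∈ S)

/-- `S` is `η`-comfortable w.r.t. the pseudomatching `M`: `S` falsifies no clause of
`φ_H` and respects at least `η·|M|` pseudoedges of `M`. -/
noncomputable def Comfortable (H : BTB V) (M : Finset (Fin H.m × Fin H.m)) (η : ℝ)
    (S : Finset (V × Bool)) : Prop :=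
  H.FalsifiesNoClause S ∧
    η * M.card ≤ ((M.filter (fun e => H.Respects e.1 e.2 S)).card : ℝ)

/-- `S` is a guarded set of literals. -/
def Guarded (H : BTB V) (S : Finset (V × Bool)) : Prop :=
  Consistent S ∧ ∀ i j ℓ, H.IsCommonLeaf i j ℓ →
    ((ℓ, true) ∉ S ∧ (ℓ, false) ∉ S) ∨
    (∃ v ∈ H.clauseVerts i j ℓ, v ≠ ℓ ∧ (v, true) ∈ S) ∨
    ((ℓ, true) ∈ S ∧ ∀ v ∈ H.clauseVerts i j ℓ, v ≠ ℓ → (v, false) ∈ S)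

/-! #### Matching CNFs and matching OR-CNFs -/

/-- The 'half clause' `C^{1/2}_{i,j}`: the positive clause on the vertices of the path
from `t_i` (if `side = true`) or from `t_j` (if `side = false`) to the common leaf `ℓ`. -/
def halfClause (H : BTB V) (i j : Fin H.m) (ℓ : V) (side : Bool) : Finset (V × Bool) :=
  (if side then (H.tree i).pathVerts ℓ else (H.tree j).pathVerts ℓ).image (fun v => (v, true))

/-- The matching CNF w.r.t. `M` determined by the side choice `c`: one half clause per
pseudoedge of `M`.  The formulas of `CNF(M)` are exactly the CNFs `matchingCNF H M c`. -/
def matchingCNF (H : BTB V) (M : Finset (Fin H.m × Fin H.m))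
    (c : Fin H.m × Fin H.m → Bool) : Set (Finset (V × Bool)) :=
  {C | ∃ e ∈ M, ∃ ℓ, H.IsCommonLeaf e.1 e.2 ℓ ∧ C = H.halfClause e.1 e.2 ℓ (c e)}

/-- A matching OR-CNF w.r.t. `M` is determined by a map `Ψ` assigning to each assignment
`S₀` of the variables `V(H) \ ⋃M` a matching CNF (given by its side choice `Ψ S₀`);
the formula is `⋁_{S₀} (Conj(S₀) ∧ matchingCNF H M (Ψ S₀))`.  `S` satisfies it iff for
(the) `S₀ ⊆ S`, `S` satisfies the corresponding matching CNF. -/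
def SatORCNF (H : BTB V) (M : Finset (Fin H.m × Fin H.m))
    (Ψ : Finset (V × Bool) → (Fin H.m × Fin H.m) → Bool) (S : Finset (V × Bool)) : Prop :=
  ∃ S₀, AssignsExactly (Finset.univ \ H.matchingRoots M) S₀ ∧ S₀ ⊆ S ∧
    SatCNF (H.matchingCNF M (Ψ S₀)) S

/-- `X` is an `(a, b)`-determining set for the NBP `Z` computing `φ_H`. -/
def IsDeterminingSet (H : BTB V) (Z : NBP V) (a b : ℝ) (X : Finset (Fin Z.n)) : Prop :=
  (X.card : ℝ) ≤ a ∧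
  ∃ M : Finset (Fin H.m × Fin H.m), H.IsPseudomatching M ∧ b ≤ (M.card : ℝ) ∧
    ∃ Ψ : Finset (V × Bool) → (Fin H.m × Fin H.m) → Bool,
      ∀ p, Z.IsCompPath p → X ⊆ pathVertices p → H.SatORCNF M Ψ (pathLits p)

end BTB


/-! ### Auxiliary machinery for Statement 14 -/

section Aux14

open List

variable {Var : Type} [DecidableEq Var] {n : ℕ}

lemma occCount_append (x : Var) (l₁ l₂ : List (NBPEdge Var n)) :
    occCount x (l₁ ++ l₂) = occCount x l₁ + occCount x l₂ := by
  simp [occCount, List.filterMap_append, List.countP_append]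

lemma occCount_ne_zero {x : Var} {q : List (NBPEdge Var n)} {e : NBPEdge Var n} {b : Bool}
    (he : e ∈ q) (hl : e.lab = some (x, b)) : occCount x q ≠ 0 := by
  have : 0 < occCount x q := by
    rw [occCount]
    apply List.countP_pos_iff.mpr
    exact ⟨(x, b), List.mem_filterMap.mpr ⟨e, he, hl⟩, by simp⟩
  omega

/-- `q` contains no edge labelled with a variable of `Y`. -/
def AvoidsL (Y : Finset Var) (q : List (NBPEdge Var n)) : Prop :=
  ∀ e ∈ q, ∀ xb : Var × Bool, e.lab = some xb → xb.1 ∉ Y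

lemma avoidsL_of_count {Y : Finset Var} {q : List (NBPEdge Var n)}
    (h : ∀ x ∈ Y, occCount x q = 0) : AvoidsL Y q := by
  intro e he xb hl hxb
  exact occCount_ne_zero he hl (h _ hxb)

lemma mem_pathVars_iff (x : Var) (q : List (NBPEdge Var n)) :
    x ∈ pathVars q ↔ ∃ e ∈ q, ∃ b, e.lab = some (x, b) := by
  constructor
  · intro hx
    rw [pathVars, List.mem_toFinset, List.mem_map] at hx
    obtain ⟨⟨x', b⟩, hmem, hfst⟩ := hx
    obtain ⟨e, he, hlab⟩ := List.mem_filterMap.mp hmem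
    subst hfst
    exact ⟨e, he, b, hlab⟩
  · rintro ⟨e, he, b, hlab⟩
    rw [pathVars, List.mem_toFinset, List.mem_map]
    exact ⟨(x, b), List.mem_filterMap.mpr ⟨e, he, hlab⟩, rfl⟩

lemma nat_ivt (f : ℕ → ℕ) (h0 : f 0 = 0) (hstep : ∀ k, f (k + 1) ≤ f k + 1) :
    ∀ N h, h ≤ f N → ∃ k, k ≤ N ∧ f k = h := by
  intro N
  induction N with
  | zero => intro h hh; exact ⟨0, le_refl 0, by omega⟩
  | succ N ih =>
    intro h hh
    by_cases hc : h ≤ f N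
    · obtain ⟨k, hk, he⟩ := ih h hc
      exact ⟨k, by omega, he⟩
    · exact ⟨N + 1, le_refl _, by have := hstep N; omega⟩

end Aux14
section Core14

open List

variable {Var : Type} [DecidableEq Var] {n : ℕ}

/-- The conclusion of the key combinatorial lemma. -/
def CoreConcl (a b : ℕ) (σ : List (NBPEdge Var n)) (F G : Finset Var) : Prop :=
  ∃ (L : List (List (NBPEdge Var n) × Bool)) (A B : Finset Var),
    (L.map Prod.fst).flatten = σ ∧ L.length ≤ a + b + 1 ∧
    A ⊆ F ∧ B ⊆ G ∧
    F.card ≤ 2 * 4 ^ (a + b) * A.card ∧ G.card ≤ 2 * 4 ^ (a + b) * B.card ∧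
    ∀ pc ∈ L, (pc.2 = true → AvoidsL B pc.1) ∧ (pc.2 = false → AvoidsL A pc.1)

lemma core_doneF (a b : ℕ) (σ : List (NBPEdge Var n)) (F G : Finset Var)
    (h : F.card ≤ 2 * (F.filter fun x => occCount x σ = 0).card) :
    CoreConcl a b σ F G := by
  refine ⟨[(σ, false)], F.filter (fun x => occCount x σ = 0), G, by simp, by simp,
    Finset.filter_subset _ _, subset_rfl, ?_, ?_, ?_⟩
  · have h4 : (1 : ℕ) ≤ 4 ^ (a + b) := Nat.one_le_pow _ _ (by norm_num)
    calc F.card ≤ 2 * (F.filter fun x => occCount x σ = 0).card := h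
      _ ≤ 2 * 4 ^ (a + b) * (F.filter fun x => occCount x σ = 0).card := by
          apply Nat.mul_le_mul_right
          nlinarith
  · have h4 : (1 : ℕ) ≤ 4 ^ (a + b) := Nat.one_le_pow _ _ (by norm_num)
    calc G.card = 1 * G.card := (one_mul _).symm
      _ ≤ 2 * 4 ^ (a + b) * G.card := by
          apply Nat.mul_le_mul_right
          nlinarith
  · intro pc hpc
    simp only [List.mem_singleton] at hpc
    subst hpc
    refine ⟨fun h' => by simp at h', fun _ => ?_⟩
    exact avoidsL_of_count (fun x hx => (Finset.mem_filter.mp hx).2)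

lemma core_doneG (a b : ℕ) (σ : List (NBPEdge Var n)) (F G : Finset Var)
    (h : G.card ≤ 2 * (G.filter fun x => occCount x σ = 0).card) :
    CoreConcl a b σ F G := by
  refine ⟨[(σ, true)], F, G.filter (fun x => occCount x σ = 0), by simp, by simp,
    subset_rfl, Finset.filter_subset _ _, ?_, ?_, ?_⟩
  · have h4 : (1 : ℕ) ≤ 4 ^ (a + b) := Nat.one_le_pow _ _ (by norm_num)
    calc F.card = 1 * F.card := (one_mul _).symm
      _ ≤ 2 * 4 ^ (a + b) * F.card := by
          apply Nat.mul_le_mul_right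
          nlinarith
  · have h4 : (1 : ℕ) ≤ 4 ^ (a + b) := Nat.one_le_pow _ _ (by norm_num)
    calc G.card ≤ 2 * (G.filter fun x => occCount x σ = 0).card := h
      _ ≤ 2 * 4 ^ (a + b) * (G.filter fun x => occCount x σ = 0).card := by
          apply Nat.mul_le_mul_right
          nlinarith
  · intro pc hpc
    simp only [List.mem_singleton] at hpc
    subst hpc
    refine ⟨fun _ => ?_, fun h' => by simp at h'⟩
    exact avoidsL_of_count (fun x hx => (Finset.mem_filter.mp hx).2)

lemma core14 :
    ∀ (K a b : ℕ) (σ : List (NBPEdge Var n)) (F G : Finset Var), a + b ≤ K →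
      Disjoint F G →
      (∀ x ∈ F, occCount x σ ≤ a) → (∀ x ∈ G, occCount x σ ≤ b) →
      CoreConcl a b σ F G := by
  intro K
  induction K with
  | zero =>
    intro a b σ F G hab hdis hF hG
    apply core_doneF
    have : F.filter (fun x => occCount x σ = 0) = F := by
      apply Finset.filter_true_of_mem
      intro x hx
      have := hF x hx
      omega
    rw [this]
    omega
  | succ K ih =>
    intro a b σ F G hab hdis hF hG
    by_cases hF0 : F.card ≤ 2 * (F.filter fun x => occCount x σ = 0).card
    · exact core_doneF a b σ F G hF0
    by_cases hG0 : G.card ≤ 2 * (G.filter fun x => occCount x σ = 0).card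
    · exact core_doneG a b σ F G hG0
    -- the interesting case
    set F' := F.filter (fun x => ¬ occCount x σ = 0) with hF'def
    set G' := G.filter (fun x => ¬ occCount x σ = 0) with hG'def
    have hF'sub : F' ⊆ F := Finset.filter_subset _ _
    have hG'sub : G' ⊆ G := Finset.filter_subset _ _
    have hFsplit : (F.filter fun x => occCount x σ = 0).card + F'.card = F.card := by
      rw [hF'def]; exact Finset.card_filter_add_card_filter_not _
    have hGsplit : (G.filter fun x => occCount x σ = 0).card + G'.card = G.card := by
      rw [hG'def]; exact Finset.card_filter_add_card_filter_not _
    have hF'pos : 0 < F'.card := by omega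
    have hG'pos : 0 < G'.card := by omega
    obtain ⟨xF, hxF⟩ := Finset.card_pos.mp hF'pos
    obtain ⟨xG, hxG⟩ := Finset.card_pos.mp hG'pos
    have ha1 : 1 ≤ a := by
      have h1 := (Finset.mem_filter.mp hxF).2
      have h2 := hF xF (hF'sub hxF)
      omega
    have hb1 : 1 ≤ b := by
      have h1 := (Finset.mem_filter.mp hxG).2
      have h2 := hG xG (hG'sub hxG)
      omega
    obtain ⟨a', rfl⟩ : ∃ a', a = a' + 1 := ⟨a - 1, by omega⟩
    obtain ⟨b', rfl⟩ : ∃ b', b = b' + 1 := ⟨b - 1, by omega⟩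
    -- counting function
    set U := F' ∪ G' with hU
    set g : ℕ → ℕ := fun k => (U.filter fun x => ¬ occCount x (σ.take k) = 0).card with hg
    have hdisj' : Disjoint F' G' :=
      Finset.disjoint_of_subset_left hF'sub (Finset.disjoint_of_subset_right hG'sub hdis)
    have hUcard : U.card = F'.card + G'.card := by
      rw [hU, Finset.card_union_of_disjoint hdisj']
    have hg0 : g 0 = 0 := by
      simp only [hg]
      rw [Finset.card_eq_zero, Finset.filter_eq_empty_iff]
      intro x _
      simp [occCount]
    have hgstep : ∀ k, g (k + 1) ≤ g k + 1 := by
      intro k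
      rcases hk : σ[k]? with _ | e
      · have hlen : σ.length ≤ k := by
          exact List.getElem?_eq_none_iff.mp hk
        have heq : σ.take (k + 1) = σ.take k := by
          rw [List.take_of_length_le hlen, List.take_of_length_le (by omega)]
        simp only [hg, heq]
        omega
      · have htake : σ.take (k + 1) = σ.take k ++ [e] := by
          rw [List.take_succ, hk]
          rfl
        rcases hlab : e.lab with _ | xb
        · have hocc : ∀ x : Var, occCount x (σ.take (k + 1)) = occCount x (σ.take k) := by
            intro x
            rw [htake, occCount_append]
            simp [occCount, hlab]
          simp only [hg, hocc]
          omega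
        · have hsub : (U.filter fun x => ¬ occCount x (σ.take (k + 1)) = 0) ⊆
              insert xb.1 (U.filter fun x => ¬ occCount x (σ.take k) = 0) := by
            intro x hx
            obtain ⟨hxU, hocc⟩ := Finset.mem_filter.mp hx
            rw [htake, occCount_append] at hocc
            by_cases h1 : occCount x (σ.take k) = 0
            · have h2 : occCount x [e] ≠ 0 := by omega
              have h3 : x = xb.1 := by
                by_contra hne
                apply h2
                simp [occCount, hlab]
                intro h'
                exact absurd h'.symm hne
              simp [h3]
            · exact Finset.mem_insert_of_mem (Finset.mem_filter.mpr ⟨hxU, h1⟩)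
          calc g (k + 1) ≤ (insert xb.1 (U.filter fun x => ¬ occCount x (σ.take k) = 0)).card :=
                Finset.card_le_card hsub
            _ ≤ g k + 1 := Finset.card_insert_le _ _
    have hgN : g σ.length = U.card := by
      simp only [hg, List.take_length]
      congr 1
      apply Finset.filter_true_of_mem
      intro x hx
      rcases Finset.mem_union.mp hx with h | h
      · exact (Finset.mem_filter.mp h).2
      · exact (Finset.mem_filter.mp h).2
    set h := (F'.card + G'.card + 1) / 2 with hh
    have hhle : h ≤ g σ.length := by rw [hgN, hUcard]; omega
    obtain ⟨k, hkN, hgk⟩ := nat_ivt g hg0 hgstep σ.length h hhle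
    set σ₀ := σ.take k with hσ₀
    set σ₁ := σ.drop k with hσ₁
    have hσsplit : σ₀ ++ σ₁ = σ := List.take_append_drop k σ
    have hocc_split : ∀ x : Var, occCount x σ₀ + occCount x σ₁ = occCount x σ := by
      intro x
      conv_rhs => rw [← hσsplit]
      rw [occCount_append]
    set F₁ := F'.filter (fun x => ¬ occCount x σ₀ = 0) with hF₁
    set F₂ := F'.filter (fun x => occCount x σ₀ = 0) with hF₂
    set G₁ := G'.filter (fun x => ¬ occCount x σ₀ = 0) with hG₁
    set G₂ := G'.filter (fun x => occCount x σ₀ = 0) with hG₂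
    have hF12 : F₂.card + F₁.card = F'.card := by
      rw [hF₁, hF₂]; exact Finset.card_filter_add_card_filter_not _
    have hG12 : G₂.card + G₁.card = G'.card := by
      rw [hG₁, hG₂]; exact Finset.card_filter_add_card_filter_not _
    have hFG1 : F₁.card + G₁.card = h := by
      have hdisj₁ : Disjoint F₁ G₁ :=
        Finset.disjoint_of_subset_left (Finset.filter_subset _ _)
          (Finset.disjoint_of_subset_right (Finset.filter_subset _ _) hdisj')
      have hfil : (U.filter fun x => ¬ occCount x σ₀ = 0) = F₁ ∪ G₁ := by
        rw [hU, Finset.filter_union]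
      rw [← Finset.card_union_of_disjoint hdisj₁, ← hfil]
      exact hgk
    have hdich : (F'.card ≤ 2 * F₁.card ∧ G'.card ≤ 2 * G₂.card) ∨
        (F'.card ≤ 2 * F₂.card ∧ G'.card ≤ 2 * G₁.card) := by omega
    rcases hdich with ⟨hdF, hdG⟩ | ⟨hdF, hdG⟩
    · -- recurse on the suffix with (F₁, G₂)
      have hrecF : ∀ x ∈ F₁, occCount x σ₁ ≤ a' := by
        intro x hx
        have h1 := (Finset.mem_filter.mp hx).2
        have h2 := hF x (hF'sub (Finset.mem_of_mem_filter _ hx))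
        have h3 := hocc_split x
        omega
      have hrecG : ∀ x ∈ G₂, occCount x σ₁ ≤ b' + 1 := by
        intro x hx
        have h2 := hG x (hG'sub (Finset.mem_of_mem_filter _ hx))
        have h3 := hocc_split x
        omega
      have hdisrec : Disjoint F₁ G₂ :=
        Finset.disjoint_of_subset_left (Finset.filter_subset _ _)
          (Finset.disjoint_of_subset_right (Finset.filter_subset _ _) hdisj')
      obtain ⟨L', A, B, hfl, hlen, hAF, hBG, hcA, hcB, hcol⟩ :=
        ih a' (b' + 1) σ₁ F₁ G₂ (by omega) hdisrec hrecF hrecG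
      refine ⟨(σ₀, true) :: L', A, B, ?_, ?_, ?_, ?_, ?_, ?_, ?_⟩
      · simp only [List.map_cons, List.flatten_cons, hfl, hσsplit]
      · simp only [List.length_cons]
        omega
      · exact hAF.trans ((Finset.filter_subset _ _).trans hF'sub)
      · exact hBG.trans ((Finset.filter_subset _ _).trans hG'sub)
      · have hpow : 4 ^ (a' + 1 + (b' + 1)) = 4 * 4 ^ (a' + (b' + 1)) := by ring
        have hFF' : F.card ≤ 2 * F'.card := by omega
        calc F.card ≤ 2 * F'.card := hFF'
          _ ≤ 4 * F₁.card := by omega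
          _ ≤ 4 * (2 * 4 ^ (a' + (b' + 1)) * A.card) := by
              apply Nat.mul_le_mul_left
              exact hcA
          _ = 2 * 4 ^ (a' + 1 + (b' + 1)) * A.card := by rw [hpow]; ring
      · have hpow : 4 ^ (a' + 1 + (b' + 1)) = 4 * 4 ^ (a' + (b' + 1)) := by ring
        have hGG' : G.card ≤ 2 * G'.card := by omega
        calc G.card ≤ 2 * G'.card := hGG'
          _ ≤ 4 * G₂.card := by omega
          _ ≤ 4 * (2 * 4 ^ (a' + (b' + 1)) * B.card) := by
              apply Nat.mul_le_mul_left
              exact hcB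
          _ = 2 * 4 ^ (a' + 1 + (b' + 1)) * B.card := by rw [hpow]; ring
      · intro pc hpc
        rcases List.mem_cons.mp hpc with rfl | h'
        · refine ⟨fun _ => ?_, fun hfalse => by simp at hfalse⟩
          apply avoidsL_of_count
          intro x hx
          exact (Finset.mem_filter.mp (hBG hx)).2
        · exact hcol pc h'
    · -- recurse on the suffix with (F₂, G₁)
      have hrecF : ∀ x ∈ F₂, occCount x σ₁ ≤ a' + 1 := by
        intro x hx
        have h2 := hF x (hF'sub (Finset.mem_of_mem_filter _ hx))
        have h3 := hocc_split x
        omega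
      have hrecG : ∀ x ∈ G₁, occCount x σ₁ ≤ b' := by
        intro x hx
        have h1 := (Finset.mem_filter.mp hx).2
        have h2 := hG x (hG'sub (Finset.mem_of_mem_filter _ hx))
        have h3 := hocc_split x
        omega
      have hdisrec : Disjoint F₂ G₁ :=
        Finset.disjoint_of_subset_left (Finset.filter_subset _ _)
          (Finset.disjoint_of_subset_right (Finset.filter_subset _ _) hdisj')
      obtain ⟨L', A, B, hfl, hlen, hAF, hBG, hcA, hcB, hcol⟩ :=
        ih (a' + 1) b' σ₁ F₂ G₁ (by omega) hdisrec hrecF hrecG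
      refine ⟨(σ₀, false) :: L', A, B, ?_, ?_, ?_, ?_, ?_, ?_, ?_⟩
      · simp only [List.map_cons, List.flatten_cons, hfl, hσsplit]
      · simp only [List.length_cons]
        omega
      · exact hAF.trans ((Finset.filter_subset _ _).trans hF'sub)
      · exact hBG.trans ((Finset.filter_subset _ _).trans hG'sub)
      · have hpow : 4 ^ (a' + 1 + (b' + 1)) = 4 * 4 ^ (a' + 1 + b') := by ring
        have hFF' : F.card ≤ 2 * F'.card := by omega
        calc F.card ≤ 2 * F'.card := hFF'
          _ ≤ 4 * F₂.card := by omega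
          _ ≤ 4 * (2 * 4 ^ (a' + 1 + b') * A.card) := by
              apply Nat.mul_le_mul_left
              exact hcA
          _ = 2 * 4 ^ (a' + 1 + (b' + 1)) * A.card := by rw [hpow]; ring
      · have hpow : 4 ^ (a' + 1 + (b' + 1)) = 4 * 4 ^ (a' + 1 + b') := by ring
        have hGG' : G.card ≤ 2 * G'.card := by omega
        calc G.card ≤ 2 * G'.card := hGG'
          _ ≤ 4 * G₁.card := by omega
          _ ≤ 4 * (2 * 4 ^ (a' + 1 + b') * B.card) := by
              apply Nat.mul_le_mul_left
              exact hcB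
          _ = 2 * 4 ^ (a' + 1 + (b' + 1)) * B.card := by rw [hpow]; ring
      · intro pc hpc
        rcases List.mem_cons.mp hpc with rfl | h'
        · refine ⟨fun htrue => by simp at htrue, fun _ => ?_⟩
          apply avoidsL_of_count
          intro x hx
          exact (Finset.mem_filter.mp (hAF hx)).2
        · exact hcol pc h'

end Core14
section Norm14

open List

variable {α : Type*} {β : Type*} {γ : Type*}

/-- Prepend a coloured part, dropping it if empty and merging with the head if colours agree. -/
noncomputable def consC (q : List α) (c : Bool) : List (List α × Bool) → List (List α × Bool)
  | [] => if q = [] then [] else [(q, c)]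
  | (q', c') :: R' =>
    if q = [] then (q', c') :: R'
    else if c = c' then (q ++ q', c) :: R'
    else (q, c) :: (q', c') :: R'

/-- Normalise a coloured partition: remove empty parts and merge adjacent parts of the
same colour. -/
noncomputable def normC : List (List α × Bool) → List (List α × Bool)
  | [] => []
  | (q, c) :: rest => consC q c (normC rest)

lemma normC_nil : normC ([] : List (List α × Bool)) = [] := rfl

lemma normC_cons (q : List α) (c : Bool) (rest : List (List α × Bool)) :
    normC ((q, c) :: rest) = consC q c (normC rest) := rfl

lemma consC_flatten (q : List α) (c : Bool) (R : List (List α × Bool)) :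
    ((consC q c R).map Prod.fst).flatten = q ++ (R.map Prod.fst).flatten := by
  match R with
  | [] =>
    by_cases hq : q = [] <;> simp [consC, hq]
  | (q', c') :: R' =>
    by_cases hq : q = []
    · simp [consC, hq]
    · by_cases hc : c = c' <;> simp [consC, hq, hc]

lemma consC_length (q : List α) (c : Bool) (R : List (List α × Bool)) :
    (consC q c R).length ≤ R.length + 1 := by
  match R with
  | [] => by_cases hq : q = [] <;> simp [consC, hq]
  | (q', c') :: R' =>
    by_cases hq : q = []
    · simp [consC, hq]
    · by_cases hc : c = c' <;> simp [consC, hq, hc]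

lemma consC_ne (q : List α) (c : Bool) (R : List (List α × Bool))
    (hR : ∀ pc ∈ R, pc.1 ≠ []) : ∀ pc ∈ consC q c R, pc.1 ≠ [] := by
  match R with
  | [] =>
    by_cases hq : q = []
    · simp [consC, hq]
    · intro pc hpc
      simp only [consC, if_neg hq, List.mem_singleton] at hpc
      subst hpc
      exact hq
  | (q', c') :: R' =>
    by_cases hq : q = []
    · intro pc hpc
      simp only [consC, if_pos hq] at hpc
      exact hR pc hpc
    · by_cases hc : c = c'
      · intro pc hpc
        simp only [consC, if_neg hq, if_pos hc, List.mem_cons] at hpc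
        rcases hpc with rfl | hpc
        · simp [hq]
        · exact hR pc (List.mem_cons_of_mem _ hpc)
      · intro pc hpc
        simp only [consC, if_neg hq, if_neg hc, List.mem_cons] at hpc
        rcases hpc with rfl | hpc
        · exact hq
        · exact hR pc (List.mem_cons.mpr hpc)

lemma consC_chain (q : List α) (c : Bool) (R : List (List α × Bool))
    (hR : R.Chain' (fun x y => x.2 ≠ y.2)) :
    (consC q c R).Chain' (fun x y => x.2 ≠ y.2) := by
  match R with
  | [] => by_cases hq : q = [] <;> simp [consC, hq, List.Chain']
  | (q', c') :: R' =>
    by_cases hq : q = []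
    · simpa [consC, hq] using hR
    · by_cases hc : c = c'
      · simp only [consC, if_neg hq, if_pos hc]
        rcases R' with _ | ⟨⟨q'', c''⟩, R''⟩
        · simp [List.Chain']
        · unfold List.Chain' at hR ⊢
          rw [List.isChain_cons_cons] at hR ⊢
          exact ⟨hc ▸ hR.1, hR.2⟩
      · simp only [consC, if_neg hq, if_neg hc]
        unfold List.Chain'
        rw [List.isChain_cons_cons]
        exact ⟨hc, hR⟩

lemma consC_prov (q : List α) (c : Bool) (R : List (List α × Bool)) :
    ∀ pc ∈ consC q c R, ∀ e ∈ pc.1,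
      (e ∈ q ∧ pc.2 = c) ∨ ∃ qc ∈ R, e ∈ qc.1 ∧ qc.2 = pc.2 := by
  match R with
  | [] =>
    by_cases hq : q = []
    · simp [consC, hq]
    · intro pc hpc e he
      simp only [consC, if_neg hq, List.mem_singleton] at hpc
      subst hpc
      exact Or.inl ⟨he, rfl⟩
  | (q', c') :: R' =>
    by_cases hq : q = []
    · intro pc hpc e he
      simp only [consC, if_pos hq] at hpc
      exact Or.inr ⟨pc, hpc, he, rfl⟩
    · by_cases hc : c = c'
      · intro pc hpc e he
        simp only [consC, if_neg hq, if_pos hc, List.mem_cons] at hpc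
        rcases hpc with rfl | hpc
        · rcases List.mem_append.mp he with h | h
          · exact Or.inl ⟨h, rfl⟩
          · exact Or.inr ⟨(q', c'), List.mem_cons_self, h, hc.symm⟩
        · exact Or.inr ⟨pc, List.mem_cons_of_mem _ hpc, he, rfl⟩
      · intro pc hpc e he
        simp only [consC, if_neg hq, if_neg hc, List.mem_cons] at hpc
        rcases hpc with rfl | hpc
        · exact Or.inl ⟨he, rfl⟩
        · exact Or.inr ⟨pc, List.mem_cons.mpr hpc, he, rfl⟩

lemma normC_flatten (L : List (List α × Bool)) :
    ((normC L).map Prod.fst).flatten = (L.map Prod.fst).flatten := by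
  induction L with
  | nil => rfl
  | cons qc rest ih =>
    obtain ⟨q, c⟩ := qc
    rw [normC_cons, consC_flatten, ih]
    simp

lemma normC_length (L : List (List α × Bool)) : (normC L).length ≤ L.length := by
  induction L with
  | nil => simp [normC_nil]
  | cons qc rest ih =>
    obtain ⟨q, c⟩ := qc
    rw [normC_cons]
    calc (consC q c (normC rest)).length ≤ (normC rest).length + 1 := consC_length _ _ _
      _ ≤ rest.length + 1 := by omega

lemma normC_ne (L : List (List α × Bool)) : ∀ pc ∈ normC L, pc.1 ≠ [] := by
  induction L with
  | nil => simp [normC_nil]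
  | cons qc rest ih =>
    obtain ⟨q, c⟩ := qc
    rw [normC_cons]
    exact consC_ne q c (normC rest) ih

lemma normC_chain (L : List (List α × Bool)) :
    (normC L).Chain' (fun x y => x.2 ≠ y.2) := by
  induction L with
  | nil => rw [normC_nil]; simp [List.Chain']
  | cons qc rest ih =>
    obtain ⟨q, c⟩ := qc
    rw [normC_cons]
    exact consC_chain q c (normC rest) ih

lemma normC_prov (L : List (List α × Bool)) :
    ∀ pc ∈ normC L, ∀ e ∈ pc.1, ∃ qc ∈ L, e ∈ qc.1 ∧ qc.2 = pc.2 := by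
  induction L with
  | nil => simp [normC_nil]
  | cons qc rest ih =>
    obtain ⟨q, c⟩ := qc
    rw [normC_cons]
    intro pc hpc e he
    rcases consC_prov q c (normC rest) pc hpc e he with ⟨heq, hc⟩ | ⟨qc', hqc', he', hc'⟩
    · exact ⟨(q, c), List.mem_cons_self, heq, hc.symm⟩
    · obtain ⟨qc₀, hqc₀, he₀, hc₀⟩ := ih qc' hqc' e he'
      exact ⟨qc₀, List.mem_cons_of_mem _ hqc₀, he₀, hc₀.trans hc'⟩

lemma getD_mem_of_lt : ∀ (M : List β) (k : ℕ) (d : β), k < M.length → M.getD k d ∈ M := by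
  intro M
  induction M with
  | nil => intro k d hk; simp at hk
  | cons x t ih =>
    intro k d hk
    cases k with
    | zero => simp
    | succ k =>
      simp only [List.getD_cons_succ]
      exact List.mem_cons_of_mem _ (ih k d (by simpa using hk))

lemma getD_map_fst : ∀ (M : List (List α × Bool)) (k : ℕ),
    (M.map Prod.fst).getD k [] = (M.getD k ([], true)).1 := by
  intro M
  induction M with
  | nil => intro k; simp
  | cons x t ih =>
    intro k
    cases k with
    | zero => rfl
    | succ k => simpa using ih k

lemma chain_parity (M : List (List α × Bool)) :
    M.Chain' (fun x y => x.2 ≠ y.2) →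
    ∀ k, k < M.length →
      (M.getD k ([], true)).2 =
        (if k % 2 = 0 then (M.getD 0 ([], true)).2 else !(M.getD 0 ([], true)).2) := by
  induction M with
  | nil => intro _ k hk; simp at hk
  | cons x M' ih =>
    intro hch k hk
    cases k with
    | zero => simp
    | succ k =>
      cases M' with
      | nil => simp at hk
      | cons y t =>
        have hxy : x.2 ≠ y.2 := (List.isChain_cons_cons.mp hch).1
        have hch' : (y :: t).Chain' (fun x y => x.2 ≠ y.2) := (List.isChain_cons_cons.mp hch).2
        have ihk := ih hch' k (by simpa using hk)
        have hy : y.2 = !x.2 := by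
          cases hb : x.2 <;> cases hb2 : y.2 <;> simp_all
        have hGD : ((x :: y :: t).getD (k + 1) ([], true)) = ((y :: t).getD k ([], true)) := rfl
        have h0 : ((y :: t).getD 0 ([], true)).2 = y.2 := rfl
        have h0' : ((x :: y :: t).getD 0 ([], true)).2 = x.2 := rfl
        rw [hGD, ihk, h0, h0', hy]
        by_cases hk2 : k % 2 = 0
        · have h1 : (k + 1) % 2 ≠ 0 := by omega
          simp [hk2, h1]
        · have h1 : (k + 1) % 2 = 0 := by omega
          simp [hk2, h1]

lemma mem_of_getLast?' {l : List β} {e : β} (h : l.getLast? = some e) : e ∈ l := by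
  have hx : e ∈ l.getLast? := by rw [h]; rfl
  obtain ⟨h', he⟩ := List.mem_getLast?_eq_getLast hx
  rw [he]
  exact List.getLast_mem h'

lemma filterMap_getLast_sublist (f : β → γ) :
    ∀ (parts : List (List β)),
      (parts.filterMap (fun q => q.getLast?.map f)) <+ ((parts.flatten).map f) := by
  intro parts
  induction parts with
  | nil => simp
  | cons q rest ih =>
    rw [List.filterMap_cons]
    cases hq : q.getLast? with
    | none =>
      have hqnil : q = [] := List.getLast?_eq_none_iff.mp hq
      subst hqnil
      simpa using ih
    | some e =>
      have he : e ∈ q := mem_of_getLast?' hq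
      simp only [Option.map_some, List.flatten_cons, List.map_append]
      exact List.Sublist.append (List.singleton_sublist.mpr (List.mem_map_of_mem he)) ih

lemma filterMap_getLast_length (f : β → γ) :
    ∀ (l : List (List β)), (∀ q ∈ l, q ≠ []) →
      (l.filterMap (fun q => q.getLast?.map f)).length = l.length := by
  intro l
  induction l with
  | nil => simp
  | cons q rest ih =>
    intro hne
    rw [List.filterMap_cons]
    cases hq : q.getLast? with
    | none =>
      exact absurd (List.getLast?_eq_none_iff.mp hq) (hne q (List.mem_cons_self))
    | some e =>
      simp only [Option.map_some]
      simp [ih (fun q h => hne q (List.mem_cons_of_mem _ h))]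

lemma boundary_succ {R : β → β → Prop} :
    ∀ (parts : List (List β)), (∀ q ∈ parts, q ≠ []) → parts.flatten.Chain' R →
      ∀ q ∈ parts.dropLast, ∀ e, q.getLast? = some e → ∃ g ∈ parts.flatten, R e g := by
  intro parts
  induction parts with
  | nil => intro _ _ q hq; simp at hq
  | cons q₀ rest ih =>
    intro hne hch q hq e he
    cases rest with
    | nil => simp at hq
    | cons r t =>
      have hfl : (q₀ :: r :: t).flatten = q₀ ++ (r :: t).flatten := rfl
      have hdrop : (q₀ :: r :: t).dropLast = q₀ :: (r :: t).dropLast := rfl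
      rw [hdrop] at hq
      unfold List.Chain' at hch
      rw [hfl, List.isChain_append] at hch
      rcases List.mem_cons.mp hq with rfl | hq'
      · obtain ⟨g, hg⟩ : ∃ g, ((r :: t).flatten).head? = some g := by
          have hr : r ≠ [] := hne r (by simp)
          cases r with
          | nil => exact absurd rfl hr
          | cons g r' => exact ⟨g, by simp⟩
        refine ⟨g, ?_, hch.2.2 e he g hg⟩
        rw [hfl]
        exact List.mem_append_right _ (List.mem_of_mem_head? hg)
      · obtain ⟨g, hgmem, hRg⟩ :=
          ih (fun q hqq => hne q (List.mem_cons_of_mem _ hqq)) hch.2.1 q hq' e he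
        refine ⟨g, ?_, hRg⟩
        rw [hfl]
        exact List.mem_append_right _ hgmem

lemma sum_two_pow_lt (H : ℕ) : (∑ k ∈ Finset.range H, 2 ^ k) < 2 ^ H := by
  induction H with
  | zero => simp
  | succ H ih =>
    rw [Finset.sum_range_succ]
    have h1 : (1 : ℕ) ≤ 2 ^ H := Nat.one_le_two_pow
    have h2 : 2 ^ (H + 1) = 2 * 2 ^ H := by ring
    omega

end Norm14
section Extra14
variable {β : Type*}
lemma flatten_dropLast_sublist (l : List (List β)) : l.dropLast.flatten.Sublist l.flatten := by
  induction l with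
  | nil => simp
  | cons q rest ih =>
    cases rest with
    | nil => simp
    | cons r t =>
      have hdrop : (q :: r :: t).dropLast = q :: (r :: t).dropLast := rfl
      rw [hdrop, List.flatten_cons, List.flatten_cons]
      exact List.Sublist.append (List.Sublist.refl q) ih
end Extra14
section Trees14

variable {V : Type} [DecidableEq V]

lemma tree_card_le (T : RootedTree V) (hb : T.IsBinary) :
    T.verts.card ≤ 2 ^ T.height := by
  classical
  set lvl : ℕ → Finset V := fun k => T.verts.filter (fun v => T.depth v = k) with hlvl
  have hstep : ∀ k, (lvl (k + 1)).card ≤ 2 * (lvl k).card := by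
    intro k
    have hsub : lvl (k + 1) ⊆ (lvl k).biUnion (fun u => T.children u) := by
      intro v hv
      obtain ⟨hvv, hvd⟩ := Finset.mem_filter.mp hv
      have hvroot : v ≠ T.root := by
        intro h
        rw [h, T.depth_root] at hvd
        omega
      have hpv : T.parent v ∈ T.verts := T.parent_mem v hvv hvroot
      have hdp : T.depth v = T.depth (T.parent v) + 1 := T.depth_parent v hvv hvroot
      refine Finset.mem_biUnion.mpr ⟨T.parent v, ?_, ?_⟩
      · exact Finset.mem_filter.mpr ⟨hpv, by omega⟩
      · rw [RootedTree.children, Finset.mem_filter]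
        exact ⟨hvv, hvroot, rfl⟩
    calc (lvl (k + 1)).card ≤ ((lvl k).biUnion (fun u => T.children u)).card :=
          Finset.card_le_card hsub
      _ ≤ ∑ u ∈ lvl k, (T.children u).card := Finset.card_biUnion_le
      _ ≤ ∑ _u ∈ lvl k, 2 := Finset.sum_le_sum (fun u hu => hb u (Finset.mem_filter.mp hu).1)
      _ = 2 * (lvl k).card := by rw [Finset.sum_const, smul_eq_mul, mul_comm]
  have hpow : ∀ k, (lvl k).card ≤ 2 ^ k := by
    intro k
    induction k with
    | zero =>
      have hsub : lvl 0 ⊆ {T.root} := by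
        intro v hv
        obtain ⟨hvv, hvd⟩ := Finset.mem_filter.mp hv
        rw [Finset.mem_singleton]
        by_contra hne
        have := T.depth_parent v hvv hne
        omega
      simpa using Finset.card_le_card hsub
    | succ k ih =>
      calc (lvl (k + 1)).card ≤ 2 * (lvl k).card := hstep k
        _ ≤ 2 * 2 ^ k := by omega
        _ = 2 ^ (k + 1) := by ring
  have hcover : T.verts ⊆ (Finset.range T.height).biUnion lvl := by
    intro v hv
    refine Finset.mem_biUnion.mpr ⟨T.depth v, ?_, Finset.mem_filter.mpr ⟨hv, rfl⟩⟩
    rw [Finset.mem_range, RootedTree.height]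
    exact Nat.lt_succ_of_le (Finset.le_sup hv)
  calc T.verts.card ≤ ((Finset.range T.height).biUnion lvl).card := Finset.card_le_card hcover
    _ ≤ ∑ k ∈ Finset.range T.height, (lvl k).card := Finset.card_biUnion_le
    _ ≤ ∑ k ∈ Finset.range T.height, 2 ^ k := Finset.sum_le_sum (fun k _ => hpow k)
    _ ≤ 2 ^ T.height := le_of_lt (sum_two_pow_lt _)

end Trees14

section Paths14

open List

variable {Var : Type} [DecidableEq Var]

lemma dst_chain_lt {Z : NBP Var} :
    ∀ (p : List (NBPEdge Var Z.n)), (∀ e ∈ p, e ∈ Z.edges) →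
      p.Chain' (fun e f => e.dst = f.src) → p.Chain' (fun e f => e.dst < f.dst) := by
  intro p
  induction p with
  | nil => intro _ _; simp [List.Chain']
  | cons e t ih =>
    intro hmem hch
    cases t with
    | nil => simp [List.Chain']
    | cons f t' =>
      unfold List.Chain' at hch ⊢
      rw [List.isChain_cons_cons] at hch ⊢
      constructor
      · have hf : f ∈ Z.edges := hmem f (List.mem_cons_of_mem _ (List.mem_cons_self))
        have := Z.acyc f hf
        rw [hch.1]
        exact this
      · exact ih (fun x hx => hmem x (List.mem_cons_of_mem _ hx)) hch.2

lemma oddEven_core {n : ℕ} {M : List (List (NBPEdge Var n) × Bool)} {A B : Finset Var}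
    (hch : M.Chain' (fun x y => x.2 ≠ y.2))
    (hav : ∀ pc ∈ M, (pc.2 = true → AvoidsL B pc.1) ∧ (pc.2 = false → AvoidsL A pc.1))
    (h0 : (M.getD 0 ([], true)).2 = true) :
    OddEvenSplit (M.map Prod.fst) A B := by
  intro k x hx
  by_cases hk : k < M.length
  · rw [getD_map_fst] at hx
    obtain ⟨e, he, bb, hlab⟩ := (mem_pathVars_iff x _).mp hx
    have hpcM : M.getD k ([], true) ∈ M := getD_mem_of_lt M k _ hk
    have hcolk := chain_parity M hch k hk
    rw [h0] at hcolk
    constructor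
    · intro hxA
      by_contra hkodd
      have hfalse : (M.getD k ([], true)).2 = false := by
        rw [hcolk, if_neg hkodd]
        rfl
      exact (hav _ hpcM).2 hfalse e he (x, bb) hlab hxA
    · intro hxB
      by_contra hkne
      have hk0 : k % 2 = 0 := by omega
      have htrue : (M.getD k ([], true)).2 = true := by
        rw [hcolk, if_pos hk0]
      exact (hav _ hpcM).1 htrue e he (x, bb) hlab hxB
  · have hdef : (M.map Prod.fst).getD k [] = [] :=
      List.getD_eq_default _ _ (by simpa using not_lt.mp hk)
    rw [hdef] at hx
    simp [pathVars] at hx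

lemma oddEven_core' {n : ℕ} {M : List (List (NBPEdge Var n) × Bool)} {A B : Finset Var}
    (hch : M.Chain' (fun x y => x.2 ≠ y.2))
    (hav : ∀ pc ∈ M, (pc.2 = true → AvoidsL B pc.1) ∧ (pc.2 = false → AvoidsL A pc.1))
    (h0 : (M.getD 0 ([], true)).2 = false) :
    OddEvenSplit (M.map Prod.fst) B A := by
  intro k x hx
  by_cases hk : k < M.length
  · rw [getD_map_fst] at hx
    obtain ⟨e, he, bb, hlab⟩ := (mem_pathVars_iff x _).mp hx
    have hpcM : M.getD k ([], true) ∈ M := getD_mem_of_lt M k _ hk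
    have hcolk := chain_parity M hch k hk
    rw [h0] at hcolk
    constructor
    · intro hxB
      by_contra hkodd
      have htrue : (M.getD k ([], true)).2 = true := by
        rw [hcolk, if_neg hkodd]
        rfl
      exact (hav _ hpcM).1 htrue e he (x, bb) hlab hxB
    · intro hxA
      by_contra hkne
      have hk0 : k % 2 = 0 := by omega
      have hfalse : (M.getD k ([], true)).2 = false := by
        rw [hcolk, if_pos hk0]
      exact (hav _ hpcM).2 hfalse e he (x, bb) hlab hxA
  · have hdef : (M.map Prod.fst).getD k [] = [] :=
      List.getD_eq_default _ _ (by simpa using not_lt.mp hk)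
    rw [hdef] at hx
    simp [pathVars] at hx

end Paths14
section Numeric14

lemma numeric_logm (mN nN d : ℕ)
    (hd1 : 1 ≤ d)
    (hn1 : 1 ≤ nN)
    (hdle : (d : ℝ) ≤ Real.logb 2 (nN : ℝ) / 100000)
    (hnm : (nN : ℝ) ≤ (mN : ℝ) * (2 : ℝ) ^ (Real.logb 2 (mN : ℝ) / 4.9 + 3)) :
    4000 * (d : ℝ) + 3000 ≤ Real.logb 2 (mN : ℝ) := by
  have hnpos : (0 : ℝ) < (nN : ℝ) := by
    have : (1 : ℝ) ≤ (nN : ℝ) := by exact_mod_cast hn1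
    linarith
  have hm1 : 1 ≤ mN := by
    by_contra h
    have hm0 : mN = 0 := by omega
    rw [hm0] at hnm
    push_cast at hnm
    rw [zero_mul] at hnm
    linarith
  have hmpos : (0 : ℝ) < (mN : ℝ) := by
    have : (1 : ℝ) ≤ (mN : ℝ) := by exact_mod_cast hm1
    linarith
  have hln : Real.logb 2 (nN : ℝ) ≤
      Real.logb 2 (mN : ℝ) + (Real.logb 2 (mN : ℝ) / 4.9 + 3) := by
    have h1 : Real.logb 2 (nN : ℝ) ≤
        Real.logb 2 ((mN : ℝ) * (2 : ℝ) ^ (Real.logb 2 (mN : ℝ) / 4.9 + 3)) :=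
      Real.logb_le_logb_of_le one_lt_two hnpos hnm
    rwa [Real.logb_mul (ne_of_gt hmpos) (ne_of_gt (Real.rpow_pos_of_pos two_pos _)),
      Real.logb_rpow two_pos (by norm_num)] at h1
  have hdln : (d : ℝ) * 100000 ≤ Real.logb 2 (nN : ℝ) := by
    have h100 : (0 : ℝ) < 100000 := by norm_num
    rw [le_div_iff₀ h100] at hdle
    linarith
  have hd1' : (1 : ℝ) ≤ (d : ℝ) := by exact_mod_cast hd1
  have h49 : Real.logb 2 (mN : ℝ) / 4.9 = Real.logb 2 (mN : ℝ) * (10 / 49) := by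
    rw [div_eq_mul_inv]
    norm_num
  rw [h49] at hln
  nlinarith [hln, hdln, hd1']

lemma numeric_size (mN d sN aN : ℕ)
    (hlm : 4000 * (d : ℝ) + 3000 ≤ Real.logb 2 (mN : ℝ))
    (hs : mN ≤ 2 * sN + 1)
    (ha : sN ≤ 2 * 4 ^ (d + d) * aN) :
    (mN : ℝ) ^ (0.999 : ℝ) ≤ (aN : ℝ) := by
  have hd0 : (0 : ℝ) ≤ (d : ℝ) := Nat.cast_nonneg d
  have hm2 : (2 : ℝ) ≤ (mN : ℝ) := by
    by_contra hlt
    push_neg at hlt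
    have h0 : (0 : ℝ) ≤ (mN : ℝ) := Nat.cast_nonneg mN
    have hle1 : (mN : ℝ) ≤ 1 := by
      have h2 : mN < 2 := by exact_mod_cast hlt
      have : mN ≤ 1 := by omega
      exact_mod_cast this
    have h2 : Real.logb 2 (mN : ℝ) ≤ 0 := (Real.logb_nonpos_iff' one_lt_two h0).mpr hle1
    linarith
  have hmpos : (0 : ℝ) < (mN : ℝ) := by linarith
  have haN1 : 1 ≤ aN := by
    by_contra h
    have haz : aN = 0 := by omega
    rw [haz, Nat.mul_zero] at ha
    have hm1 : mN ≤ 1 := by omega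
    have : (mN : ℝ) ≤ 1 := by exact_mod_cast hm1
    linarith
  have hP : ((2 : ℝ) ^ (4 * d + 3)) ≤ (mN : ℝ) ^ (0.001 : ℝ) := by
    have h1 : ((4 * d + 3 : ℕ) : ℝ) ≤ 0.001 * Real.logb 2 (mN : ℝ) := by
      push_cast
      linarith
    calc ((2 : ℝ) ^ (4 * d + 3)) = (2 : ℝ) ^ (((4 * d + 3 : ℕ)) : ℝ) :=
          (Real.rpow_natCast 2 _).symm
      _ ≤ (2 : ℝ) ^ (0.001 * Real.logb 2 (mN : ℝ)) :=
          Real.rpow_le_rpow_of_exponent_le one_le_two h1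
      _ = (2 : ℝ) ^ (Real.logb 2 (mN : ℝ) * (0.001 : ℝ)) := by ring_nf
      _ = ((2 : ℝ) ^ Real.logb 2 (mN : ℝ)) ^ (0.001 : ℝ) := Real.rpow_mul (by norm_num) _ _
      _ = (mN : ℝ) ^ (0.001 : ℝ) := by
          rw [Real.rpow_logb (by norm_num) (by norm_num) hmpos]
  have hmP : (mN : ℝ) ≤ (2 : ℝ) ^ (4 * d + 3) * (aN : ℝ) := by
    have h1 : (mN : ℝ) ≤ 2 * (sN : ℝ) + 1 := by exact_mod_cast hs
    have h2 : (sN : ℝ) ≤ 2 * (4 : ℝ) ^ (d + d) * (aN : ℝ) := by exact_mod_cast ha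
    have h4 : (4 : ℝ) ^ (d + d) = (2 : ℝ) ^ (4 * d) := by
      have h44 : (4 : ℝ) = 2 ^ 2 := by norm_num
      rw [h44, ← pow_mul]
      congr 1
      omega
    have h8 : (2 : ℝ) ^ (4 * d + 3) = 8 * (2 : ℝ) ^ (4 * d) := by
      rw [pow_add]
      ring
    have hpos : (1 : ℝ) ≤ (2 : ℝ) ^ (4 * d) := one_le_pow₀ one_le_two
    have haR : (1 : ℝ) ≤ (aN : ℝ) := by exact_mod_cast haN1
    rw [h8]
    rw [h4] at h2
    nlinarith
  have hsplit : (mN : ℝ) ^ (0.999 : ℝ) * (mN : ℝ) ^ (0.001 : ℝ) = (mN : ℝ) := by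
    rw [← Real.rpow_add hmpos]
    norm_num
  have hPpos : (0 : ℝ) < (2 : ℝ) ^ (4 * d + 3) := by positivity
  have hXP : (mN : ℝ) ^ (0.999 : ℝ) * (2 : ℝ) ^ (4 * d + 3) ≤ (mN : ℝ) := by
    calc (mN : ℝ) ^ (0.999 : ℝ) * (2 : ℝ) ^ (4 * d + 3)
        ≤ (mN : ℝ) ^ (0.999 : ℝ) * (mN : ℝ) ^ (0.001 : ℝ) :=
          mul_le_mul_of_nonneg_left hP (le_of_lt (Real.rpow_pos_of_pos hmpos _))
      _ = (mN : ℝ) := hsplit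
  have hfin : (mN : ℝ) ^ (0.999 : ℝ) * (2 : ℝ) ^ (4 * d + 3) ≤
      (aN : ℝ) * (2 : ℝ) ^ (4 * d + 3) := by
    calc (mN : ℝ) ^ (0.999 : ℝ) * (2 : ℝ) ^ (4 * d + 3) ≤ (mN : ℝ) := hXP
      _ ≤ (2 : ℝ) ^ (4 * d + 3) * (aN : ℝ) := hmP
      _ = (aN : ℝ) * (2 : ℝ) ^ (4 * d + 3) := by ring
  exact le_of_mul_le_mul_right hfin hPpos

end Numeric14
/-- every computational path of a uniform read-`d`-times NBP computing
`φ_H`, `d ≤ (log₂ n)/10⁵`, contains a set `X` of at most `(log₂ n)/4000` vertices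
separating two disjoint subsets of `Roots(H)` of size at least `m^0.999` each. -/
theorem statement_14 (V : Type) [DecidableEq V] [Fintype V] (H : BTB V)
    (hH : H.IsPseudoexpander) (Z : NBP V) (d : ℕ)
    (hZ : Z.UniformReadTimes d)
    (hcomp : Z.Computes Finset.univ H.SatisfiesPhi)
    (hd : (d : ℝ) ≤ Real.logb 2 (Fintype.card V) / 100000) :
    ∀ p, Z.IsCompPath p →
      ∃ X ⊆ pathVertices p, (X.card : ℝ) ≤ Real.logb 2 (Fintype.card V) / 4000 ∧
        ∃ Y₁ Y₂ : Finset V, Y₁ ⊆ H.rootSet ∧ Y₂ ⊆ H.rootSet ∧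
          (H.m : ℝ) ^ (0.999 : ℝ) ≤ Y₁.card ∧ (H.m : ℝ) ^ (0.999 : ℝ) ≤ Y₂.card ∧
          Z.Separates X Y₁ Y₂ := by
  intro p hp
  have hpne : p ≠ [] := hp.1.1
  have hpedges : ∀ e ∈ p, e ∈ Z.edges := hp.1.2.1
  have hpchain : p.Chain' (fun e f => e.dst = f.src) := hp.1.2.2.1
  by_cases hm0 : H.m = 0
  · -- degenerate case: no trees, hence no vertices at all
    haveI hVempty : IsEmpty V := ⟨fun v => by
      obtain ⟨i, -⟩ := H.cover v
      exact absurd i.isLt (by omega)⟩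
    have hcard0 : Fintype.card V = 0 := Fintype.card_eq_zero
    have hzero : (H.m : ℝ) ^ (0.999 : ℝ) = 0 := by
      rw [hm0]
      push_cast
      exact Real.zero_rpow (by norm_num)
    refine ⟨∅, Finset.empty_subset _, ?_, ∅, ∅, Finset.empty_subset _, Finset.empty_subset _,
      ?_, ?_, ?_⟩
    · rw [hcard0]
      simp
    · rw [hzero]; simp
    · rw [hzero]; simp
    · refine ⟨Finset.disjoint_left.mpr (fun _ h => absurd h (Finset.notMem_empty _)),
        Finset.empty_subset _, Finset.empty_subset _,
        Finset.notMem_empty _, Finset.notMem_empty _, p, [p], hp, ?_, Or.inl ?_⟩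
      · refine ⟨by simp, by simp, ?_, by simp⟩
        intro q hq
        rw [List.mem_singleton] at hq
        subst hq
        exact hpne
      · intro k x hx
        exact ⟨fun h => absurd h (Finset.notMem_empty x),
          fun h => absurd h (Finset.notMem_empty x)⟩
  · have hm1 : 1 ≤ H.m := Nat.one_le_iff_ne_zero.mpr hm0
    haveI hVne : Nonempty V := ⟨(H.tree ⟨0, hm1⟩).root⟩
    have hn1 : 1 ≤ Fintype.card V := Fintype.card_pos
    by_cases hd0 : d = 0
    · -- contradiction: nothing can be read at all, but `φ_H` is not constant
      exfalso
      set Sf : Finset (V × Bool) := Finset.univ.image (fun v => (v, false)) with hSf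
      have hAE : AssignsExactly Finset.univ Sf := by
        constructor
        · intro l _
          exact Finset.mem_univ _
        · intro x _
          refine ⟨false, Finset.mem_image.mpr ⟨x, Finset.mem_univ _, rfl⟩, ?_⟩
          intro b hb
          obtain ⟨v, -, hv⟩ := Finset.mem_image.mp hb
          exact (Prod.mk.injEq _ _ _ _ ▸ hv).2.symm ▸ rfl
      have hlits : pathLits p = ∅ := by
        rw [Finset.eq_empty_iff_forall_notMem]
        intro l hl
        rw [pathLits, List.mem_toFinset, List.mem_filterMap] at hl
        obtain ⟨e, he, hlab⟩ := hl
        have hxvars : l.1 ∈ Z.vars :=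
          Finset.mem_biUnion.mpr ⟨e, hpedges e he, by simp [hlab]⟩
        have huni := hZ.2 p hp.1 l.1 hxvars
        rw [hd0] at huni
        exact occCount_ne_zero he hlab huni
      have hsat : H.SatisfiesPhi Sf :=
        (hcomp.2 Sf hAE).mpr ⟨p, hp, by rw [hlits]; exact Finset.empty_subset _⟩
      obtain ⟨i, j, ℓ, hcl⟩ : ∃ i j ℓ, H.IsCommonLeaf i j ℓ := by
        set i₀ : Fin H.m := ⟨0, hm1⟩
        obtain ⟨v, hv, hmax⟩ := Finset.exists_max_image (H.tree i₀).verts (H.tree i₀).depth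
          ⟨_, (H.tree i₀).root_mem⟩
        have hleaf : v ∈ (H.tree i₀).leaves := by
          rw [RootedTree.leaves, Finset.mem_filter]
          refine ⟨hv, ?_⟩
          by_contra hch
          obtain ⟨w, hw⟩ := Finset.nonempty_iff_ne_empty.mpr hch
          rw [RootedTree.children, Finset.mem_filter] at hw
          obtain ⟨hwv, hwroot, hwp⟩ := hw
          have hdw := (H.tree i₀).depth_parent w hwv hwroot
          rw [hwp] at hdw
          have := hmax w hwv
          omega
        have h2 := H.leaf_two i₀ v hleaf
        obtain ⟨j, hjmem, hji⟩ :
            ∃ j ∈ Finset.univ.filter (fun j => v ∈ (H.tree j).leaves), j ≠ i₀ := by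
          by_contra hno
          push_neg at hno
          have hsub : Finset.univ.filter (fun j => v ∈ (H.tree j).leaves) ⊆ {i₀} :=
            fun j hj => Finset.mem_singleton.mpr (hno j hj)
          have hle := Finset.card_le_card hsub
          rw [h2] at hle
          simp at hle
        exact ⟨i₀, j, v, Ne.symm hji, hleaf, (Finset.mem_filter.mp hjmem).2⟩
      obtain ⟨u, -, hutrue⟩ := hsat i j ℓ hcl
      obtain ⟨w, -, hw⟩ := Finset.mem_image.mp hutrue
      simpa using congrArg Prod.snd hw
    · -- MAIN CASE
      have hd1 : 1 ≤ d := Nat.one_le_iff_ne_zero.mpr hd0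
      have hocc : ∀ x : V, occCount x p ≤ d := fun x => hZ.1 p hp.1 x
      have hroot_card : H.rootSet.card = H.m := by
        rw [BTB.rootSet, Finset.card_image_of_injective _ H.roots_inj, Finset.card_univ,
          Fintype.card_fin]
      obtain ⟨F, hFsub, hFcard⟩ :=
        Finset.exists_subset_card_eq (s := H.rootSet) (n := H.m / 2)
          (by rw [hroot_card]; omega)
      set G := H.rootSet \ F with hGdef
      have hGsub : G ⊆ H.rootSet := Finset.sdiff_subset
      have hGcard : G.card = H.m - H.m / 2 := by
        rw [hGdef, Finset.card_sdiff_of_subset hFsub, hroot_card, hFcard]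
      have hdisjFG : Disjoint F G := Finset.disjoint_sdiff
      obtain ⟨L, A, B, hflat, hlen, hAF, hBG, hcA, hcB, hcol⟩ :=
        core14 (d + d) d d p F G (le_refl _) hdisjFG (fun x _ => hocc x) (fun x _ => hocc x)
      set M := normC L with hM
      set parts := M.map Prod.fst with hparts
      have hflatM : parts.flatten = p := by
        rw [hparts, hM, normC_flatten, hflat]
      have hMne : M ≠ [] := by
        intro h
        rw [hparts, h] at hflatM
        simp at hflatM
        first
          | exact hpne hflatM
          | exact hpne hflatM.symm
      have hpartsne : ∀ q ∈ parts, q ≠ [] := by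
        intro q hq
        rw [hparts] at hq
        obtain ⟨pc, hpc, rfl⟩ := List.mem_map.mp hq
        exact normC_ne L pc hpc
      have hlenM : M.length ≤ d + d + 1 := le_trans (normC_length L) hlen
      have havoid : ∀ pc ∈ M, (pc.2 = true → AvoidsL B pc.1) ∧
          (pc.2 = false → AvoidsL A pc.1) := by
        intro pc hpc
        constructor
        · intro hc e he xb hlab hmem
          obtain ⟨qc, hqc, heq, hcq⟩ := normC_prov L pc hpc e he
          exact (hcol qc hqc).1 (hcq.trans hc) e heq xb hlab hmem
        · intro hc e he xb hlab hmem
          obtain ⟨qc, hqc, heq, hcq⟩ := normC_prov L pc hpc e he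
          exact (hcol qc hqc).2 (hcq.trans hc) e heq xb hlab hmem
      have hchainM : M.Chain' (fun x y => x.2 ≠ y.2) := normC_chain L
      set cutL := parts.dropLast.filterMap (fun q => q.getLast?.map NBPEdge.dst) with hcut
      have hcutlen : cutL.length = parts.length - 1 := by
        rw [hcut, filterMap_getLast_length _ _
          (fun q hq => hpartsne q ((List.dropLast_sublist _).subset hq))]
        exact List.length_dropLast
      have hchlt : p.Chain' (fun e f => e.dst < f.dst) := dst_chain_lt p hpedges hpchain
      have hmapchain : (p.map NBPEdge.dst).Chain' (· < ·) := (List.isChain_map _).mpr hchlt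
      have hpair : (p.map NBPEdge.dst).Pairwise (· < ·) := List.isChain_iff_pairwise.mp hmapchain
      have hsubl : cutL.Sublist (p.map NBPEdge.dst) := by
        have h1 := filterMap_getLast_sublist NBPEdge.dst parts.dropLast
        have h2 : parts.dropLast.flatten.Sublist parts.flatten := flatten_dropLast_sublist parts
        have h3 := h2.map NBPEdge.dst
        rw [hflatM] at h3
        exact h1.trans h3
      have hnodup : cutL.Nodup := (hpair.sublist hsubl).imp (fun h => ne_of_lt h)
      set X := cutL.toFinset with hX
      have hXcard : X.card = parts.length - 1 := by
        rw [hX, List.toFinset_card_of_nodup hnodup, hcutlen]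
      have hplen1 : 1 ≤ parts.length := by
        rw [hparts]
        simpa [Nat.one_le_iff_ne_zero, Nat.pos_iff_ne_zero] using List.length_pos_iff.mpr hMne
      have hcut_mem : ∀ v ∈ cutL, ∃ e ∈ p, v = e.dst ∧
          ∃ q ∈ parts.dropLast, q.getLast? = some e := by
        intro v hv
        rw [hcut, List.mem_filterMap] at hv
        obtain ⟨q, hq, hsome⟩ := hv
        obtain ⟨e, he1, he2⟩ := Option.map_eq_some_iff.mp hsome
        have heq : e ∈ q := mem_of_getLast?' he1
        have hef : e ∈ parts.flatten :=
          List.mem_flatten.mpr ⟨q, (List.dropLast_sublist _).subset hq, heq⟩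
        rw [hflatM] at hef
        exact ⟨e, hef, he2.symm, q, hq, he1⟩
      have hXsub : X ⊆ pathVertices p := by
        intro v hv
        rw [hX, List.mem_toFinset] at hv
        obtain ⟨e, he, rfl, -⟩ := hcut_mem v hv
        exact Finset.mem_union_right _ (List.mem_toFinset.mpr (List.mem_map_of_mem he))
      have hXsource : Z.source ∉ X := by
        intro hv
        rw [hX, List.mem_toFinset] at hv
        obtain ⟨e, he, heq, -⟩ := hcut_mem _ hv
        exact Z.source_no_in e (hpedges e he) heq.symm
      have hXsink : Z.sink ∉ X := by
        intro hv
        rw [hX, List.mem_toFinset] at hv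
        obtain ⟨e, he, heq, q, hq, hlast⟩ := hcut_mem _ hv
        obtain ⟨g, hg, hRg⟩ := boundary_succ parts hpartsne (by rw [hflatM]; exact hpchain)
          q hq e hlast
        rw [hflatM] at hg
        exact Z.sink_no_out g (hpedges g hg) (by rw [heq, hRg])
      -- numeric facts
      have hnm : ((Fintype.card V : ℕ) : ℝ) ≤
          (H.m : ℝ) * (2 : ℝ) ^ (Real.logb 2 (H.m : ℝ) / 4.9 + 3) := by
        have hsum : Fintype.card V ≤ ∑ i : Fin H.m, ((H.tree i).verts.card) := by
          have hsub : (Finset.univ : Finset V) ⊆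
              Finset.univ.biUnion (fun i => (H.tree i).verts) := by
            intro v _
            obtain ⟨i, hi⟩ := H.cover v
            exact Finset.mem_biUnion.mpr ⟨i, Finset.mem_univ _, hi⟩
          calc Fintype.card V = (Finset.univ : Finset V).card := (Finset.card_univ).symm
            _ ≤ (Finset.univ.biUnion (fun i => (H.tree i).verts)).card :=
                Finset.card_le_card hsub
            _ ≤ ∑ i : Fin H.m, ((H.tree i).verts.card) := Finset.card_biUnion_le
        have hterm : ∀ i : Fin H.m, (((H.tree i).verts.card : ℕ) : ℝ) ≤
            (2 : ℝ) ^ (Real.logb 2 (H.m : ℝ) / 4.9 + 3) := by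
          intro i
          calc (((H.tree i).verts.card : ℕ) : ℝ) ≤ ((2 ^ (H.tree i).height : ℕ) : ℝ) := by
                exact_mod_cast tree_card_le _ (H.binary i)
            _ = (2 : ℝ) ^ (((H.tree i).height : ℕ) : ℝ) := by
                push_cast
                rw [Real.rpow_natCast]
            _ ≤ (2 : ℝ) ^ (Real.logb 2 (H.m : ℝ) / 4.9 + 3) :=
                Real.rpow_le_rpow_of_exponent_le one_le_two (hH.1 i)
        calc ((Fintype.card V : ℕ) : ℝ) ≤ ((∑ i : Fin H.m, (H.tree i).verts.card : ℕ) : ℝ) := by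
              exact_mod_cast hsum
          _ = ∑ i : Fin H.m, (((H.tree i).verts.card : ℕ) : ℝ) := by push_cast; rfl
          _ ≤ ∑ _i : Fin H.m, (2 : ℝ) ^ (Real.logb 2 (H.m : ℝ) / 4.9 + 3) :=
              Finset.sum_le_sum (fun i _ => hterm i)
          _ = (H.m : ℝ) * (2 : ℝ) ^ (Real.logb 2 (H.m : ℝ) / 4.9 + 3) := by
              rw [Finset.sum_const, Finset.card_univ, Fintype.card_fin, nsmul_eq_mul]
      have hlm : 4000 * (d : ℝ) + 3000 ≤ Real.logb 2 (H.m : ℝ) :=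
        numeric_logm H.m (Fintype.card V) d hd1 hn1 hd hnm
      have hY1 : (H.m : ℝ) ^ (0.999 : ℝ) ≤ (A.card : ℝ) :=
        numeric_size H.m d F.card A.card hlm (by rw [hFcard]; omega) hcA
      have hY2 : (H.m : ℝ) ^ (0.999 : ℝ) ≤ (B.card : ℝ) :=
        numeric_size H.m d G.card B.card hlm (by rw [hGcard]; omega) hcB
      have hXbound : (X.card : ℝ) ≤ Real.logb 2 (Fintype.card V) / 4000 := by
        have h1 : X.card ≤ d + d := by
          have := hlenM
          rw [hXcard, hparts]
          simp only [List.length_map]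
          omega
        have h2 : (X.card : ℝ) ≤ (d : ℝ) + (d : ℝ) := by exact_mod_cast h1
        have hln0 : 0 ≤ Real.logb 2 (Fintype.card V) :=
          Real.logb_nonneg one_lt_two (by exact_mod_cast hn1)
        have h100 : (0 : ℝ) < 100000 := by norm_num
        rw [le_div_iff₀ h100] at hd
        rw [le_div_iff₀ (by norm_num : (0:ℝ) < 4000)]
        linarith
      -- assemble
      refine ⟨X, hXsub, hXbound, A, B, hAF.trans hFsub, hBG.trans hGsub, hY1, hY2, ?_⟩
      refine ⟨hdisjFG.mono hAF hBG, ?_, ?_, hXsource, hXsink, p, parts, hp, ?_, ?_⟩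
      · rw [hcomp.1]
        exact Finset.subset_univ _
      · rw [hcomp.1]
        exact Finset.subset_univ _
      · refine ⟨hflatM.symm, ?_, hpartsne, ?_⟩
        · rw [hXcard]
          omega
        · rw [hX, hcut]
      · rcases hc0 : (M.getD 0 ([], true)).2 with _ | _
        · exact Or.inr (oddEven_core' hchainM havoid hc0)
        · exact Or.inl (oddEven_core hchainM havoid hc0)

end NBPPaper
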